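/- Let X be a compact metric space, (φⱼ)ⱼ≥0 a sequence of multivalued self-maps of X, and k ≥ 1. Define the k-th iterate sequence φ^[k] by (φ^[k])ⱼ := φ_{jk+k−1} ∘ … ∘ φ_{jk}. Then h(φ^[k]₀,∞) ≤ k · h(φ₀,∞), where h denotes the parametric topological entropy on orbits defined via separated sets. -/

import Mathlib

open Filter

noncomputable section

/-- A set `S` is `(q,ε)`-separated if any two distinct points of `S` are at `q`-distance `> ε`. -/
def SepSet {α : Type*} (q : α → α → ℝ) (ε : ℝ) (S : Set α) : Prop :=
  ∀ ⦃x⦄, x ∈ S → ∀ ⦃y⦄, y ∈ S → x ≠ y → ε < q x y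

/-- The maximal cardinality of a finite `(q,ε)`-separated subset of `A`. -/
def maxSep {α : Type*} (q : α → α → ℝ) (ε : ℝ) (A : Set α) : ℕ :=
  sSup {m | ∃ S : Set α, S ⊆ A ∧ SepSet q ε S ∧ S.Finite ∧ S.ncard = m}

/-- The minimal cardinality of a finite `(q,ε)`-spanning set in `A`. -/
def minSpan {α : Type*} (q : α → α → ℝ) (ε : ℝ) (A : Set α) : ℕ :=
  sInf {m | ∃ R : Set α, R ⊆ A ∧ (∀ y ∈ A, ∃ x ∈ R, q x y ≤ ε) ∧ R.Finite ∧ R.ncard = m}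

/-- The set of `n`-orbits of the sequence of multivalued maps `φ`. -/
def Orb {X : Type*} (φ : ℕ → X → Set X) (n : ℕ) : Set (Fin n → X) :=
  {x | ∀ (i : ℕ) (h : i + 1 < n), x ⟨i + 1, h⟩ ∈ φ i (x ⟨i, by omega⟩)}

/-- Topological entropy via separated sets (`Fin n → X` carries the sup metric). -/
def entSep {X : Type*} [MetricSpace X] (φ : ℕ → X → Set X) : EReal :=
  ⨆ (ε : ℝ) (_ : 0 < ε),
    Filter.limsup
      (fun n : ℕ =>
        ((Real.log (maxSep (fun a b : Fin n → X => dist a b) ε (Orb φ n)) / n : ℝ) : EReal))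
      Filter.atTop

/-- Topological entropy via spanning sets. -/
def entSpan {X : Type*} [MetricSpace X] (φ : ℕ → X → Set X) : EReal :=
  ⨆ (ε : ℝ) (_ : 0 < ε),
    Filter.limsup
      (fun n : ℕ =>
        ((Real.log (minSpan (fun a b : Fin n → X => dist a b) ε (Orb φ n)) / n : ℝ) : EReal))
      Filter.atTop

end

/-- Composition of multivalued maps: `(ψ ∘ φ)(x) = ⋃_{y ∈ φ x} ψ y`. -/
def mcomp {X : Type*} (ψ φ : X → Set X) : X → Set X := fun x => ⋃ y ∈ φ x, ψ y

/-- `block φ a m = φ_{a+m-1} ∘ … ∘ φ_a` (the identity for `m = 0`). -/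
def block {X : Type*} (φ : ℕ → X → Set X) (a : ℕ) : ℕ → X → Set X
  | 0 => fun x => {x}
  | (m + 1) => mcomp (φ (a + m)) (block φ a m)

/-- The `k`-th iterate sequence: `(φ^[k])ⱼ = φ_{jk+k−1} ∘ … ∘ φ_{jk}`. -/
def iterSeq {X : Type*} (φ : ℕ → X → Set X) (k : ℕ) : ℕ → X → Set X :=
  fun j => block φ (j * k) k

section AuxProofs

open Metric Set

variable {X : Type*}

lemma block_chain (φ : ℕ → X → Set X) (a : ℕ) :
    ∀ (m : ℕ) {x x' : X}, x' ∈ block φ a m x →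
      ∃ c : ℕ → X, c 0 = x ∧ c m = x' ∧ ∀ r < m, c (r + 1) ∈ φ (a + r) (c r) := by
  intro m
  induction m with
  | zero =>
    intro x x' h
    simp only [block, Set.mem_singleton_iff] at h
    exact ⟨fun _ => x, rfl, h.symm, by omega⟩
  | succ m ih =>
    intro x x' h
    simp only [block, mcomp, Set.mem_iUnion, exists_prop] at h
    obtain ⟨y, hy, hx'⟩ := h
    obtain ⟨c, hc0, hcm, hstep⟩ := ih hy
    refine ⟨fun r => if r ≤ m then c r else x', by simp [hc0], by simp, ?_⟩
    intro r hr
    rcases Nat.lt_or_ge r m with h1 | h1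
    · simpa [show r + 1 ≤ m from h1, show r ≤ m from h1.le] using hstep r h1
    · have : r = m := by omega
      subst this
      simpa [show ¬ (r + 1 ≤ r) by omega, hcm] using hx'

lemma exists_tail (φ : ℕ → X → Set X) (hne : ∀ j x, (φ j x).Nonempty)
    (a : ℕ) (x0 : X) :
    ∃ c : ℕ → X, c 0 = x0 ∧ ∀ r, c (r + 1) ∈ φ (a + r) (c r) := by
  refine ⟨fun r => Nat.rec x0 (fun r xr => (hne (a + r) xr).some) r, rfl, ?_⟩
  intro r
  exact (hne (a + r) _).some_mem

lemma orbit_lift (φ : ℕ → X → Set X) (hne : ∀ j x, (φ j x).Nonempty)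
    (k : ℕ) (hk : 1 ≤ k) (n : ℕ) (x : Fin n → X) (hx : x ∈ Orb (iterSeq φ k) n) :
    ∃ y : Fin (n * k) → X, y ∈ Orb φ (n * k) ∧
      ∀ (i : ℕ) (hi : i < n),
        y ⟨i * k, (Nat.mul_lt_mul_right (show 0 < k by omega)).mpr hi⟩ = x ⟨i, hi⟩ := by
  have kpos : 0 < k := hk
  rcases Nat.eq_zero_or_pos n with hn0 | hn
  · subst hn0
    refine ⟨fun j => absurd j.2 (by omega), ?_, ?_⟩
    · intro i h
      exact absurd h (by omega)
    · intro i hi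
      exact absurd hi (by omega)
  · have hCex : ∀ i : ℕ, ∃ c : ℕ → X, ∀ hi : i < n,
        c 0 = x ⟨i, hi⟩ ∧ (∀ r < k, c (r + 1) ∈ φ (i * k + r) (c r)) ∧
          ∀ h : i + 1 < n, c k = x ⟨i + 1, h⟩ := by
      intro i
      by_cases hi : i < n
      · by_cases h : i + 1 < n
        · have hmem : x ⟨i + 1, h⟩ ∈ block φ (i * k) k (x ⟨i, hi⟩) := hx i h
          obtain ⟨c, hc0, hck, hstep⟩ := block_chain φ (i * k) k hmem
          exact ⟨c, fun _ => ⟨hc0, fun r hr => hstep r hr, fun _ => hck⟩⟩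
        · obtain ⟨c, hc0, hstep⟩ := exists_tail φ hne (i * k) (x ⟨i, hi⟩)
          exact ⟨c, fun _ => ⟨hc0, fun r _ => hstep r, fun h' => absurd h' h⟩⟩
      · exact ⟨fun _ => x ⟨0, hn⟩, fun hi' => absurd hi' hi⟩
    choose C hC using hCex
    have hdiv : ∀ j : ℕ, j < n * k → j / k < n := fun j hj =>
      (Nat.div_lt_iff_lt_mul kpos).2 hj
    refine ⟨fun j => C (j.1 / k) (j.1 % k), ?_, ?_⟩
    · intro j hj
      show C ((j + 1) / k) ((j + 1) % k) ∈ φ j (C (j / k) (j % k))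
      have hjlt : j < n * k := Nat.lt_of_succ_lt hj
      set i := j / k with hidef
      set r := j % k with hrdef
      have hjd : i * k + r = j := by rw [Nat.mul_comm]; exact Nat.div_add_mod j k
      have hr : r < k := Nat.mod_lt _ kpos
      have hi_lt : i < n := hdiv j hjlt
      have hspec := hC i hi_lt
      rcases Nat.lt_or_ge (r + 1) k with hcase | hcase
      · have ej : j + 1 = (r + 1) + i * k := by omega
        have e1 : (j + 1) / k = i := by
          rw [ej, Nat.add_mul_div_right _ _ kpos, Nat.div_eq_of_lt hcase, Nat.zero_add]
        have e2 : (j + 1) % k = r + 1 := by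
          rw [ej, Nat.add_mul_mod_self_right, Nat.mod_eq_of_lt hcase]
        rw [e1, e2, show j = i * k + r by omega]
        exact hspec.2.1 r hr
      · have hrk : r + 1 = k := by omega
        have ej : j + 1 = (i + 1) * k := by rw [Nat.succ_mul]; omega
        have hi1 : i + 1 < n := Nat.lt_of_mul_lt_mul_right (ej ▸ hj)
        have e1 : (j + 1) / k = i + 1 := by rw [ej, Nat.mul_div_cancel _ kpos]
        have e2 : (j + 1) % k = 0 := by rw [ej, Nat.mul_mod_left]
        rw [e1, e2, (hC (i + 1) hi1).1, ← hspec.2.2 hi1, ← hrk,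
          show j = i * k + r by omega]
        exact hspec.2.1 r hr
    · intro i hi
      show C (i * k / k) (i * k % k) = x ⟨i, hi⟩
      rw [Nat.mul_div_cancel _ kpos, Nat.mul_mod_left]
      exact (hC i hi).1

lemma bddAbove_sepCard {α : Type*} [MetricSpace α] [CompactSpace α] {ε : ℝ} (hε : 0 < ε)
    (A : Set α) :
    BddAbove {m | ∃ S : Set α, S ⊆ A ∧ SepSet (fun a b => dist a b) ε S ∧ S.Finite ∧
      S.ncard = m} := by
  classical
  have htb : TotallyBounded (Set.univ : Set α) := isCompact_univ.totallyBounded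
  obtain ⟨t, htfin, htcover⟩ := (Metric.totallyBounded_iff.1 htb) (ε / 2) (by linarith)
  refine ⟨t.ncard, ?_⟩
  rintro m ⟨S, _, hsep, hfin, rfl⟩
  have hmap : ∀ s, s ∈ S → ∃ c, c ∈ t ∧ dist s c < ε / 2 := by
    intro s _
    have := htcover (Set.mem_univ s)
    simpa [Metric.mem_ball] using this
  choose! f hf1 hf2 using hmap
  refine Set.ncard_le_ncard_of_injOn f (fun s hs => hf1 s hs) ?_ htfin
  intro s hs s' hs' hff
  by_contra hne'
  have h1 : ε < dist s s' := hsep hs hs' hne'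
  have h2 : dist s s' ≤ dist s (f s) + dist (f s') s' := by
    rw [hff]
    exact dist_triangle _ _ _
  have h3 : dist s (f s) < ε / 2 := hf2 s hs
  have h4 : dist (f s') s' < ε / 2 := by rw [dist_comm]; exact hf2 s' hs'
  linarith

lemma sep_exists_coord {α : Type*} [MetricSpace α] {n : ℕ} {ε : ℝ} (hε : 0 < ε)
    {x y : Fin n → α} (h : ε < dist x y) : ∃ i : Fin n, ε < dist (x i) (y i) := by
  by_contra hcon
  push_neg at hcon
  exact absurd ((dist_pi_le_iff hε.le).2 hcon) (not_le.2 h)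

lemma maxSep_le_lift {X : Type*} [MetricSpace X] [CompactSpace X]
    (φ : ℕ → X → Set X) (hne : ∀ j x, (φ j x).Nonempty) (k : ℕ) (hk : 1 ≤ k)
    {ε : ℝ} (hε : 0 < ε) (n : ℕ) :
    maxSep (fun a b : Fin n → X => dist a b) ε (Orb (iterSeq φ k) n) ≤
      maxSep (fun a b : Fin (n * k) → X => dist a b) ε (Orb φ (n * k)) := by
  classical
  refine csSup_le_csSup (bddAbove_sepCard hε _)
    ⟨0, ∅, Set.empty_subset _, fun x hx => absurd hx (Set.notMem_empty x),
      Set.finite_empty, Set.ncard_empty _⟩ ?_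
  rintro m ⟨S, hSA, hsep, hfin, rfl⟩
  have hlift := fun s : S => orbit_lift φ hne k hk n s (hSA s.2)
  choose g hg1 hg2 using hlift
  have hcoord : ∀ (s s' : S), (s : Fin n → X) ≠ (s' : Fin n → X) →
      ∃ i : Fin n, ε < dist (g s ⟨i.1 * k, (Nat.mul_lt_mul_right (show 0 < k by omega)).mpr i.2⟩)
        (g s' ⟨i.1 * k, (Nat.mul_lt_mul_right (show 0 < k by omega)).mpr i.2⟩) := by
    intro s s' hne'
    obtain ⟨i, hi⟩ := sep_exists_coord hε (hsep s.2 s'.2 hne')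
    refine ⟨i, ?_⟩
    rw [hg2 s i.1 i.2, hg2 s' i.1 i.2]
    simpa using hi
  have hginj : Function.Injective g := by
    intro s s' hgs
    by_contra hne'
    have hv : (s : Fin n → X) ≠ (s' : Fin n → X) := fun hv => hne' (Subtype.ext hv)
    obtain ⟨i, hi⟩ := hcoord s s' hv
    rw [hgs, dist_self] at hi
    linarith
  haveI : Finite S := hfin.to_subtype
  refine ⟨Set.range g, ?_, ?_, Set.finite_range g, ?_⟩
  · rintro y ⟨s, rfl⟩
    exact hg1 s
  · rintro y ⟨s, rfl⟩ y' ⟨s', rfl⟩ hne'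
    have hss' : s ≠ s' := fun h => hne' (by rw [h])
    have hv : (s : Fin n → X) ≠ (s' : Fin n → X) := fun hv => hss' (Subtype.ext hv)
    obtain ⟨i, hi⟩ := hcoord s s' hv
    exact hi.trans_le (dist_le_pi_dist _ _ _)
  · rw [← Nat.card_coe_set_eq, Nat.card_range_of_injective hginj,
      Nat.card_coe_set_eq]

lemma log_nat_mono {a b : ℕ} (h : a ≤ b) : Real.log a ≤ Real.log b := by
  rcases Nat.eq_zero_or_pos a with h0 | h0
  · simp only [h0, Nat.cast_zero, Real.log_zero]
    exact Real.log_natCast_nonneg b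
  · exact Real.log_le_log (by exact_mod_cast h0) (by exact_mod_cast h)

end AuxProofs

/-- `h(φ^[k]) ≤ k · h(φ)` for the parametric entropy on orbits via separated
sets. -/
theorem entSep_iterSeq_le
    {X : Type*} [MetricSpace X] [CompactSpace X]
    (φ : ℕ → X → Set X) (hne : ∀ j x, (φ j x).Nonempty)
    (k : ℕ) (hk : 1 ≤ k) :
    entSep (iterSeq φ k) ≤ (k : EReal) * entSep φ := by
  have kpos : 0 < k := hk
  have kposR : (0 : ℝ) < (k : ℝ) := by exact_mod_cast kpos
  rw [entSep]
  refine iSup₂_le fun ε hε => ?_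
  set s₂ : ℕ → ℕ := fun m => maxSep (fun a b : Fin m → X => dist a b) ε (Orb φ m) with hs₂
  set b : ℕ → EReal := fun m => ((Real.log (s₂ m) / m : ℝ) : EReal) with hbdef
  have hb0 : ∀ m, (0 : EReal) ≤ b m := fun m =>
    EReal.coe_nonneg.2 (div_nonneg (Real.log_natCast_nonneg _) (Nat.cast_nonneg _))
  set L := limsup b atTop with hLdef
  have hL0 : (0 : EReal) ≤ L := le_limsup_of_frequently_le (Frequently.of_forall hb0)
  have hLent : L ≤ entSep φ := by
    rw [entSep]
    exact le_iSup₂_of_le ε hε le_rfl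
  have hknn : (0 : EReal) ≤ (k : EReal) := by
    rw [← EReal.coe_coe_eq_natCast]
    exact EReal.coe_nonneg.2 (by positivity)
  have hpoint : ∀ n : ℕ,
      Real.log (maxSep (fun a b : Fin n → X => dist a b) ε (Orb (iterSeq φ k) n)) / n
        ≤ (k : ℝ) * (Real.log (s₂ (n * k)) / ((n * k : ℕ) : ℝ)) := by
    intro n
    rcases Nat.eq_zero_or_pos n with hn0 | hn
    · simp [hn0]
    · have h1 := maxSep_le_lift φ hne k hk hε n
      have h2 : Real.log (maxSep (fun a b : Fin n → X => dist a b) ε (Orb (iterSeq φ k) n))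
          ≤ Real.log (s₂ (n * k)) := log_nat_mono h1
      have npos : (0 : ℝ) < (n : ℝ) := by exact_mod_cast hn
      have e : (k : ℝ) * (Real.log (s₂ (n * k)) / ((n * k : ℕ) : ℝ))
          = Real.log (s₂ (n * k)) / (n : ℝ) := by
        push_cast
        field_simp
      rw [e]
      gcongr
  have key : limsup (fun n : ℕ =>
      ((Real.log (maxSep (fun a b : Fin n → X => dist a b) ε (Orb (iterSeq φ k) n)) / n : ℝ)
        : EReal)) atTop ≤ (k : EReal) * L := by
    rcases eq_or_ne L ⊤ with htop | htop
    · rw [htop, EReal.mul_top_of_pos]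
      · exact le_top
      · rw [← EReal.coe_coe_eq_natCast]
        exact EReal.coe_pos.2 kposR
    · have hbot : L ≠ ⊥ := by
        intro h
        rw [h] at hL0
        exact absurd hL0 (by simp)
      set ℓ := L.toReal with hldef
      have hLl : L = (ℓ : EReal) := (EReal.coe_toReal htop hbot).symm
      have hkL : (k : EReal) * L = (((k : ℝ) * ℓ : ℝ) : EReal) := by
        rw [hLl, ← EReal.coe_coe_eq_natCast, ← EReal.coe_mul]
      refine le_of_forall_gt_imp_ge_of_dense fun c hc => ?_
      rcases eq_or_ne c ⊤ with rfl | hct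
      · exact le_top
      · have hcb : c ≠ ⊥ := by
          intro h
          rw [h] at hc
          exact absurd hc (by simp)
        obtain ⟨c', rfl⟩ : ∃ c' : ℝ, c = (c' : EReal) :=
          ⟨c.toReal, (EReal.coe_toReal hct hcb).symm⟩
        rw [hkL] at hc
        have hc'r : (k : ℝ) * ℓ < c' := EReal.coe_lt_coe_iff.1 hc
        have hlt : ℓ < c' / k := by
          rw [lt_div_iff₀ kposR]
          nlinarith
        have hev : ∀ᶠ m in atTop, b m < ((c' / k : ℝ) : EReal) := by
          refine eventually_lt_of_limsup_lt ?_
          rw [← hLdef, hLl]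
          exact EReal.coe_lt_coe_iff.2 hlt
        have hmul : Tendsto (fun n : ℕ => n * k) atTop atTop :=
          tendsto_atTop_atTop.2 fun m =>
            ⟨m, fun n hn => le_trans hn (Nat.le_mul_of_pos_right n kpos)⟩
        have hev2 := hmul.eventually hev
        refine limsup_le_of_le (by isBoundedDefault) ?_
        filter_upwards [hev2] with n hn
        simp only [hbdef] at hn
        have hnr : Real.log (s₂ (n * k)) / ((n * k : ℕ) : ℝ) < c' / k :=
          EReal.coe_lt_coe_iff.1 hn
        have hle := hpoint n
        have hmul2 : (k : ℝ) * (Real.log (s₂ (n * k)) / ((n * k : ℕ) : ℝ))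
            < (k : ℝ) * (c' / k) := by
          exact mul_lt_mul_of_pos_left hnr kposR
        have hkc : (k : ℝ) * (c' / k) = c' := by field_simp
        have hfin : Real.log (maxSep (fun a b : Fin n → X => dist a b) ε
            (Orb (iterSeq φ k) n)) / n < c' := by
          rw [← hkc]
          exact lt_of_le_of_lt hle hmul2
        exact EReal.coe_le_coe_iff.2 hfin.le
  exact key.trans (mul_le_mul_of_nonneg_left hLent hknn)
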